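/- Let X, Y be Banach spaces, C ⊆ Y a closed convex pointed cone with nonempty interior, f : X → Y, x̄ ∈ Eff(X, f), and ξ̄ ∈ C* \ {0}. If the scalar problem of minimizing h(x) = ⟨ξ̄, f(x)⟩ over X is Tykhonov well-posed with minimizer x̄, then the vector problem (X, f) is DH-well-posed at x̄. -/
import Mathlib


/-- If `xbar ∈ Eff(X,f)`, `ξ ∈ C* \ {0}` and the scalar problem of minimizing
`x ↦ ξ (f x)` is Tykhonov well-posed with minimizer `xbar`, then `(X, f)` is DH-well-posed
at `xbar`. -/
theorem DH_wellposed_of_scalar_Tykhonov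
    {X Y : Type*} [NormedAddCommGroup X] [NormedSpace ℝ X] [CompleteSpace X]
    [NormedAddCommGroup Y] [NormedSpace ℝ Y] [CompleteSpace Y]
    (C : Set Y) (hCclosed : IsClosed C) (hCconv : Convex ℝ C)
    (hCcone : ∀ t : ℝ, 0 ≤ t → ∀ y ∈ C, t • y ∈ C)
    (hCpointed : C ∩ (-C) = {0}) (hCint : (interior C).Nonempty)
    (f : X → Y) (xbar : X)
    (heff : {y | ∃ x, y = f x - f xbar} ∩ (-C) = {0})
    (ξ : Y →L[ℝ] ℝ) (hξC : ∀ c ∈ C, 0 ≤ ξ c) (hξ0 : ξ ≠ 0)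
    -- Tykhonov well-posedness of the scalar problem, with (unique) minimizer `xbar`:
    (hmin : ∀ x : X, x ≠ xbar → ξ (f xbar) < ξ (f x))
    (hTyk : ∀ u : ℕ → X,
      Filter.Tendsto (fun k => ξ (f (u k))) Filter.atTop (nhds (ξ (f xbar))) →
      Filter.Tendsto u Filter.atTop (nhds xbar)) :
    ∀ c ∈ C, sInf ((fun α : ℝ => Metric.diam
      {x : X | f xbar + α • c - f x ∈ C}) '' Set.Ioi (0 : ℝ)) = 0 := by
  intro c hc
  set S : Set ℝ := (fun α : ℝ => Metric.diam
      {x : X | f xbar + α • c - f x ∈ C}) '' Set.Ioi (0 : ℝ) with hS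
  have hne : S.Nonempty := ⟨_, ⟨1, by norm_num, rfl⟩⟩
  have hbdd : ∀ y ∈ S, (0:ℝ) ≤ y := by
    rintro y ⟨α, -, rfl⟩; exact Metric.diam_nonneg
  have hlow : (0:ℝ) ≤ sInf S := le_csInf hne hbdd
  have key : ∀ ε : ℝ, 0 < ε → ∃ α : ℝ, 0 < α ∧
      Metric.diam {x : X | f xbar + α • c - f x ∈ C} ≤ ε := by
    intro ε hε
    by_contra hcon
    push_neg at hcon
    have hk : ∀ k : ℕ, ∃ x : X,
        f xbar + (1/(k+1) : ℝ) • c - f x ∈ C ∧ ε/2 < dist x xbar := by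
      intro k
      have hα : (0:ℝ) < 1/(k+1) := by positivity
      by_contra h'
      push_neg at h'
      have hdiam : Metric.diam {x : X | f xbar + (1/(k+1) : ℝ) • c - f x ∈ C} ≤ ε := by
        apply Metric.diam_le_of_forall_dist_le hε.le
        intro x hx y hy
        calc dist x y ≤ dist x xbar + dist xbar y := dist_triangle _ _ _
          _ ≤ ε/2 + ε/2 := by
              have h1 := h' x hx
              have h2 := h' y hy
              rw [dist_comm xbar y]; linarith
          _ = ε := by ring
      exact absurd hdiam (not_le.mpr (hcon _ hα))
    choose u hu hud using hk
    have hupper : ∀ k : ℕ, ξ (f (u k)) ≤ ξ (f xbar) + (1/(k+1) : ℝ) * ξ c := by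
      intro k
      have h0 := hξC _ (hu k)
      have heq : ξ (f xbar + (1/(k+1) : ℝ) • c - f (u k))
          = ξ (f xbar) + (1/(k+1) : ℝ) * ξ c - ξ (f (u k)) := by
        rw [map_sub, map_add, map_smul]; simp
      rw [heq] at h0
      linarith
    have hlower : ∀ k : ℕ, ξ (f xbar) ≤ ξ (f (u k)) := by
      intro k
      rcases eq_or_ne (u k) xbar with h | h
      · rw [h]
      · exact (hmin _ h).le
    have htend : Filter.Tendsto (fun k => ξ (f (u k))) Filter.atTop (nhds (ξ (f xbar))) := by
      have h1 : Filter.Tendsto (fun k : ℕ => ξ (f xbar) + (1/(k+1) : ℝ) * ξ c)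
          Filter.atTop (nhds (ξ (f xbar))) := by
        have h2 := (tendsto_one_div_add_atTop_nhds_zero_nat.mul_const (ξ c)).const_add
          (ξ (f xbar))
        simpa using h2
      exact tendsto_of_tendsto_of_tendsto_of_le_of_le tendsto_const_nhds h1 hlower hupper
    have hconv := hTyk u htend
    rw [Metric.tendsto_atTop] at hconv
    obtain ⟨N, hN⟩ := hconv (ε/2) (by linarith)
    exact absurd (hN N le_rfl) (not_lt.mpr (hud N).le)
  have hup : sInf S ≤ 0 := by
    apply le_of_forall_pos_le_add
    intro ε hε
    obtain ⟨α, hα, hdiam⟩ := key ε hε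
    calc sInf S ≤ Metric.diam {x : X | f xbar + α • c - f x ∈ C} :=
          csInf_le ⟨0, hbdd⟩ ⟨α, hα, rfl⟩
      _ ≤ ε := hdiam
      _ = 0 + ε := by ring
  linarith
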